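/- Let f(z) ∈ 𝔽₂[z] be a nonzero polynomial. Then there exist a unique integer r ≥ 0 and unique polynomials v(z), u(z) ∈ 𝔽₂[z] such that f(z) = z^r · v(z) · u(z), where u(0) = v(0) = 1, v is self-reciprocal (i.e., z^{deg v} v(1/z) = v(z)), and gcd(u, ũ) = 1 where ũ(z) = z^{deg u} u(1/z). Moreover every self-reciprocal divisor of f with nonzero constant term divides v. -/

import Mathlib

open Polynomial

lemma zmod2_ne_zero : ∀ x : ZMod 2, x ≠ 0 → x = 1 := by decide

lemma zmod2_unit_poly (w : (Polynomial (ZMod 2))ˣ) : (w : Polynomial (ZMod 2)) = 1 := by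
  obtain ⟨c, hc, hcw⟩ := Polynomial.isUnit_iff.mp w.isUnit
  have : c = 1 := zmod2_ne_zero c hc.ne_zero
  rw [← hcw, this, map_one]

lemma zmod2_eq_of_dvd_dvd {p q : Polynomial (ZMod 2)} (hp : p ≠ 0)
    (h1 : p ∣ q) (h2 : q ∣ p) : p = q := by
  obtain ⟨w, hw⟩ := (associated_of_dvd_dvd h1 h2)
  rw [← hw, zmod2_unit_poly w, mul_one]

lemma rev_rev {p : Polynomial (ZMod 2)} (h : p.coeff 0 ≠ 0) :
    p.reverse.reverse = p := by
  have hp : p ≠ 0 := fun hh => h (by simp [hh])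
  have h1 : p.mirror = p.reverse := by
    rw [Polynomial.mirror, natTrailingDegree_eq_zero_of_constantCoeff_ne_zero h,
      pow_zero, mul_one]
  have h2 : p.reverse.mirror = p.reverse.reverse := by
    rw [Polynomial.mirror, natTrailingDegree_eq_zero_of_constantCoeff_ne_zero
      (by simpa [constantCoeff_apply, coeff_zero_reverse] using leadingCoeff_ne_zero.mpr hp),
      pow_zero, mul_one]
  rw [← h2, ← h1, mirror_mirror]

lemma dvd_rev {p q : Polynomial (ZMod 2)} (hd : p ∣ q) : p.reverse ∣ q.reverse := by
  obtain ⟨e, rfl⟩ := hd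
  rw [reverse_mul_of_domain]
  exact Dvd.intro _ rfl

lemma coeff0_ne {p q : Polynomial (ZMod 2)} (hd : p ∣ q) (h : q.coeff 0 ≠ 0) :
    p.coeff 0 ≠ 0 := by
  obtain ⟨e, rfl⟩ := hd
  rw [mul_coeff_zero] at h
  exact fun hh => h (by rw [hh, zero_mul])



/-- Every nonzero `f ∈ 𝔽₂[z]` factors uniquely as `f = z^r · v · u` with
`u(0) = v(0) = 1`, `v` self-reciprocal, and `u` coprime to its reciprocal `ũ`;
moreover every self-reciprocal divisor of `f` with nonzero constant term divides `v`. -/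
theorem stmt4 (f : Polynomial (ZMod 2)) (hf : f ≠ 0) :
    ∃ (r : ℕ) (v u : Polynomial (ZMod 2)),
      (f = X ^ r * v * u ∧ u.coeff 0 = 1 ∧ v.coeff 0 = 1 ∧
        v.reverse = v ∧ IsCoprime u u.reverse) ∧
      (∀ d : Polynomial (ZMod 2), d ∣ f → d.coeff 0 ≠ 0 → d.reverse = d → d ∣ v) ∧
      (∀ (r' : ℕ) (v' u' : Polynomial (ZMod 2)),
        (f = X ^ r' * v' * u' ∧ u'.coeff 0 = 1 ∧ v'.coeff 0 = 1 ∧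
          v'.reverse = v' ∧ IsCoprime u' u'.reverse) →
        r' = r ∧ v' = v ∧ u' = u) := by
  classical
  obtain ⟨g, hfg, hXg⟩ := f.exists_eq_pow_rootMultiplicity_mul_and_not_dvd hf 0
  rw [map_zero, sub_zero] at hfg hXg
  set r := f.rootMultiplicity 0 with hrdef
  have hg0 : g.coeff 0 ≠ 0 := fun hh => hXg (X_dvd_iff.mpr hh)
  have hgne : g ≠ 0 := fun hh => hg0 (by simp [hh])
  have hgr0 : g.reverse.coeff 0 ≠ 0 := by
    rw [coeff_zero_reverse]; exact leadingCoeff_ne_zero.mpr hgne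
  set v := EuclideanDomain.gcd g g.reverse with hvdef
  have hvg : v ∣ g := EuclideanDomain.gcd_dvd_left _ _
  have hvgr : v ∣ g.reverse := EuclideanDomain.gcd_dvd_right _ _
  have hvne : v ≠ 0 := fun hh => hgne (by
    have := EuclideanDomain.gcd_eq_zero_iff.mp (hvdef ▸ hh)
    exact this.1)
  have hv0 : v.coeff 0 ≠ 0 := coeff0_ne hvg hg0
  -- v is self-reciprocal
  have hvrev : v.reverse = v := by
    have h1 : v.reverse ∣ g.reverse := dvd_rev hvg
    have h2 : v.reverse ∣ g := by
      have := dvd_rev hvgr; rwa [rev_rev hg0] at this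
    have h3 : v.reverse ∣ v := EuclideanDomain.dvd_gcd h2 h1
    have h4 : v ∣ v.reverse := by
      have := dvd_rev h3; rwa [rev_rev hv0] at this
    exact (zmod2_eq_of_dvd_dvd hvne h4 h3).symm
  obtain ⟨u, hu⟩ := hvg
  have hvg : v ∣ g := ⟨u, hu⟩
  have hune : u ≠ 0 := fun hh => hgne (by rw [hu, hh, mul_zero])
  have hu0 : u.coeff 0 ≠ 0 := coeff0_ne (Dvd.intro_left v hu.symm) hg0
  have hgrev : g.reverse = v * u.reverse := by
    rw [hu, reverse_mul_of_domain, hvrev]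
  -- maximality
  have hmax : ∀ d : Polynomial (ZMod 2), d ∣ f → d.coeff 0 ≠ 0 → d.reverse = d → d ∣ v := by
    intro d hdf hd0 hdrev
    have hXd : ¬ (X : Polynomial (ZMod 2)) ∣ d := fun hh => hd0 (X_dvd_iff.mp hh)
    have hcop : IsCoprime (X ^ r : Polynomial (ZMod 2)) d :=
      ((Polynomial.irreducible_X.coprime_iff_not_dvd).mpr hXd).pow_left
    have hdg : d ∣ g := by
      refine hcop.symm.dvd_of_dvd_mul_left ?_
      rwa [hfg] at hdf
    have hdgr : d ∣ g.reverse := by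
      have := dvd_rev hdg; rwa [hdrev] at this
    exact EuclideanDomain.dvd_gcd hdg hdgr
  -- coprimality of u and its reverse
  have hcop : IsCoprime u u.reverse := by
    rw [← EuclideanDomain.gcd_isUnit_iff]
    by_contra hns
    have hgcdne : EuclideanDomain.gcd u u.reverse ≠ 0 := fun hh =>
      hune (EuclideanDomain.gcd_eq_zero_iff.mp hh).1
    obtain ⟨p, hp, hpd⟩ := WfDvdMonoid.exists_irreducible_factor hns hgcdne
    have hpu : p ∣ u := hpd.trans (EuclideanDomain.gcd_dvd_left _ _)
    have hpur : p ∣ u.reverse := hpd.trans (EuclideanDomain.gcd_dvd_right _ _)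
    have h1 : v * p ∣ g := by rw [hu]; exact mul_dvd_mul_left v hpu
    have h2 : v * p ∣ g.reverse := by rw [hgrev]; exact mul_dvd_mul_left v hpur
    have h3 : v * p ∣ v := EuclideanDomain.dvd_gcd h1 h2
    obtain ⟨c, hc⟩ := h3
    have : p * c = 1 := by
      apply mul_left_cancel₀ hvne
      rw [← mul_assoc, ← hc, mul_one]
    exact hp.not_isUnit (IsUnit.of_mul_eq_one _ this)
  refine ⟨r, v, u, ⟨by rw [hfg, hu, mul_assoc], zmod2_ne_zero _ hu0, zmod2_ne_zero _ hv0,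
    hvrev, hcop⟩, hmax, ?_⟩
  -- uniqueness
  rintro r' v' u' ⟨hfeq, hu'0, hv'0, hv'rev, hcop'⟩
  have hh0 : (v' * u').coeff 0 ≠ 0 := by
    rw [mul_coeff_zero, hv'0, hu'0, mul_one]; exact one_ne_zero
  have hhne : v' * u' ≠ 0 := fun hh => hh0 (by simp [hh])
  have hfeq2 : f = X ^ r' * (v' * u') := by rw [hfeq, mul_assoc]
  have hr' : r' = r := by
    rw [hrdef, hfeq2, rootMultiplicity_mul (by rw [← hfeq2]; exact hf)]
    have e1 : rootMultiplicity 0 ((X : Polynomial (ZMod 2)) ^ r') = r' := by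
      have := rootMultiplicity_X_sub_C_pow (R := ZMod 2) 0 r'
      rwa [map_zero, sub_zero] at this
    have e2 : rootMultiplicity 0 (v' * u') = 0 :=
      rootMultiplicity_eq_zero (by
        rw [IsRoot.def, ← coeff_zero_eq_eval_zero]; exact hh0)
    rw [e1, e2, add_zero]
  have hg' : g = v' * u' := by
    apply mul_left_cancel₀ (pow_ne_zero r (X_ne_zero (R := ZMod 2)))
    rw [← hfg, ← hr', ← hfeq2]
  have hv'v : v' ∣ v := hmax v' ⟨X ^ r' * u', by rw [hfeq]; ring⟩
    (by rw [hv'0]; exact one_ne_zero) hv'rev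
  have hvv' : v ∣ v' := by
    obtain ⟨a, b, hab⟩ := hcop'
    have hgrev' : g.reverse = v' * u'.reverse := by
      rw [hg', reverse_mul_of_domain, hv'rev]
    have : v' = a * g + b * g.reverse := by
      rw [hgrev', hg']
      calc v' = (a * u' + b * u'.reverse) * v' := by rw [hab, one_mul]
      _ = a * (v' * u') + b * (v' * u'.reverse) := by ring
    rw [this]
    exact dvd_add (Dvd.dvd.mul_left hvg a) (Dvd.dvd.mul_left hvgr b)
  have hveq : v' = v := zmod2_eq_of_dvd_dvd (fun hh => hvne (zero_dvd_iff.mp (hh ▸ hv'v))) hv'v hvv'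
  refine ⟨hr', hveq, ?_⟩
  apply mul_left_cancel₀ hvne
  rw [← hu, hg', hveq]
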